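/- arXiv:2507.16730 — 4 statements merged into one kernel-verified Lean document; each statement's English description precedes it below -/
import Mathlib

section
/- (Johnson–Newman) Let G and H be two finite simple graphs on the same vertex set of size n, with adjacency matrices A(G) and A(H). Then G and H are generalized cospectral if and only if there exists a regular orthogonal n×n real matrix Q such that Qᵀ A(G) Q = A(H). -/
open SimpleGraph Matrix

/-- The characteristic polynomial (over `ℝ`) of the adjacency matrix of a finite graph. -/
noncomputable def adjCharPoly {V : Type} [Fintype V] [DecidableEq V] (G : SimpleGraph V) :
    Polynomial ℝ :=
  letI := Classical.decRel G.Adj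
  Matrix.charpoly (G.adjMatrix ℝ)

/-- Two finite graphs are cospectral if their adjacency matrices have the same
characteristic polynomial. -/
def Cospectral {V W : Type} [Fintype V] [DecidableEq V] [Fintype W] [DecidableEq W]
    (G : SimpleGraph V) (H : SimpleGraph W) : Prop :=
  adjCharPoly G = adjCharPoly H

/-- Generalized cospectrality: the graphs are cospectral and so are their complements. -/
def GenCospectral {V W : Type} [Fintype V] [DecidableEq V] [Fintype W] [DecidableEq W]
    (G : SimpleGraph V) (H : SimpleGraph W) : Prop :=
  Cospectral G H ∧ Cospectral Gᶜ Hᶜ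

/-- A cograph is a graph with no induced path `P₄` (on 4 vertices). -/
def IsCograph {V : Type} (G : SimpleGraph V) : Prop :=
  ¬ ∃ f : Fin 4 ↪ V, ∀ i j, G.Adj (f i) (f j) ↔ (SimpleGraph.pathGraph 4).Adj i j

/-- The number of isomorphism classes of graphs on `n` vertices satisfying an
isomorphism-invariant property `P`. -/
noncomputable def classCount (n : ℕ) (P : SimpleGraph (Fin n) → Prop) : ℕ :=
  Nat.card (Quot fun G H : {G : SimpleGraph (Fin n) // P G} => Nonempty (G.1 ≃g H.1))

/-- The adjacency matrix of a graph, over `ℝ`. -/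
noncomputable def adjMat {V : Type} [Fintype V] [DecidableEq V] (G : SimpleGraph V) :
    Matrix V V ℝ :=
  letI := Classical.decRel G.Adj
  G.adjMatrix ℝ

section JNAux

open Polynomial Finset
open scoped Classical

variable {n : ℕ}

lemma map_C_one : ((1 : Matrix (Fin n) (Fin n) ℝ).map (Polynomial.C : ℝ → ℝ[X])) = 1 :=
  Matrix.map_one _ (map_zero C) (map_one C)

/-- charpoly is invariant under orthogonal conjugation. -/
lemma charpoly_orth_conj {Q M : Matrix (Fin n) (Fin n) ℝ} (hQ : Qᵀ * Q = 1) :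
    (Q * M * Qᵀ).charpoly = M.charpoly := by
  have hQ' : Q * Qᵀ = 1 := mul_eq_one_comm.mp hQ
  let φ := (Polynomial.C : ℝ →+* ℝ[X])
  have hmapmul : ∀ (P N : Matrix (Fin n) (Fin n) ℝ), (P * N).map (φ : ℝ → ℝ[X]) =
      P.map φ * N.map φ := fun P N => Matrix.map_mul
  have htr : ∀ (P : Matrix (Fin n) (Fin n) ℝ), (Pᵀ).map (φ : ℝ → ℝ[X]) = (P.map φ)ᵀ :=
    fun P => rfl
  have key : charmatrix (Q * M * Qᵀ) = Q.map φ * charmatrix M * (Q.map φ)ᵀ := by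
    rw [charmatrix, charmatrix, Matrix.mul_sub, Matrix.sub_mul]
    congr 1
    · rw [scalar_apply, ← Matrix.smul_one_eq_diagonal, Matrix.mul_smul, Matrix.smul_mul,
        Matrix.mul_one]
      congr 1
      rw [← htr, ← hmapmul, hQ', map_C_one]
    · rw [RingHom.mapMatrix_apply, RingHom.mapMatrix_apply, ← htr, ← hmapmul, ← hmapmul]
  have hdet : (Q.map (φ : ℝ → ℝ[X]))ᵀ.det * (Q.map (φ : ℝ → ℝ[X])).det = 1 := by
    rw [← Matrix.det_mul, ← htr, ← hmapmul, hQ, map_C_one, Matrix.det_one]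
  rw [Matrix.charpoly, Matrix.charpoly, key, Matrix.det_mul, Matrix.det_mul]
  calc (Q.map (φ : ℝ → ℝ[X])).det * M.charmatrix.det * (Q.map (φ : ℝ → ℝ[X]))ᵀ.det
      = ((Q.map (φ : ℝ → ℝ[X]))ᵀ.det * (Q.map (φ : ℝ → ℝ[X])).det) * M.charmatrix.det := by ring
    _ = M.charmatrix.det := by rw [hdet, one_mul]

lemma mul_vecMulVec_mul (M N : Matrix (Fin n) (Fin n) ℝ) (x y : Fin n → ℝ) :
    M * vecMulVec x y * N = vecMulVec (M *ᵥ x) (y ᵥ* N) := by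
  ext i j
  simp only [Matrix.mul_apply, vecMulVec_apply, mulVec, vecMul, dotProduct]
  rw [Finset.sum_mul_sum]
  simp only [Finset.mul_sum, Finset.sum_mul]
  rw [Finset.sum_comm]
  apply Finset.sum_congr rfl; intros; apply Finset.sum_congr rfl; intros; ring

lemma charpoly_diagonal (d : Fin n → ℝ) :
    (diagonal d).charpoly = ∏ i, (X - C (d i)) := by
  rw [Matrix.charpoly_of_upperTriangular _ (Matrix.blockTriangular_diagonal d)]
  simp

lemma real_conjTranspose (A : Matrix (Fin n) (Fin n) ℝ) : Aᴴ = Aᵀ := by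
  ext i j; simp [Matrix.conjTranspose_apply]

/-- Spectral decomposition for real symmetric matrices, packaged. -/
lemma exists_spectral {A : Matrix (Fin n) (Fin n) ℝ} (hA : Aᵀ = A) :
    ∃ (U : Matrix (Fin n) (Fin n) ℝ) (d : Fin n → ℝ), Uᵀ * U = 1 ∧ A = U * diagonal d * Uᵀ := by
  have hH : A.IsHermitian := by rw [Matrix.IsHermitian, real_conjTranspose, hA]
  refine ⟨hH.eigenvectorUnitary, hH.eigenvalues, ?_, ?_⟩
  · have := (Matrix.mem_unitaryGroup_iff'.mp hH.eigenvectorUnitary.2)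
    rwa [Matrix.star_eq_conjTranspose, real_conjTranspose] at this
  · have := hH.spectral_theorem
    rw [Unitary.conjStarAlgAut_apply, Matrix.star_eq_conjTranspose, real_conjTranspose] at this
    exact this

lemma multiset_eq_of_prod_X_sub_C {a b : Fin n → ℝ}
    (h : ∏ i, (X - C (a i)) = ∏ i, (X - C (b i))) :
    Multiset.map a Finset.univ.val = Multiset.map b Finset.univ.val := by
  have ha := Polynomial.roots_multiset_prod_X_sub_C (Multiset.map a Finset.univ.val)
  have hb := Polynomial.roots_multiset_prod_X_sub_C (Multiset.map b Finset.univ.val)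
  rw [← ha, ← hb]
  congr 1
  rw [Multiset.map_map, Multiset.map_map]
  simpa [Finset.prod, Multiset.map_map] using h

lemma exists_perm_comp {a b : Fin n → ℝ}
    (h : Multiset.map a Finset.univ.val = Multiset.map b Finset.univ.val) :
    ∃ σ : Equiv.Perm (Fin n), b = a ∘ σ := by
  classical
  have key : a ∘ Tuple.sort a = b ∘ Tuple.sort b := by
    apply List.ofFn_injective
    refine (fun h1 h2 h3 => List.Perm.eq_of_sortedLE h2 h3 h1) ?_ ?_ ?_
    · rw [← Multiset.coe_eq_coe]
      have h1 : ∀ (f : Fin n → ℝ) (σ : Equiv.Perm (Fin n)),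
          (↑(List.ofFn (f ∘ σ)) : Multiset ℝ) = Multiset.map f Finset.univ.val := by
        intro f σ
        have huv : (Finset.univ.val : Multiset (Fin n)) = ↑(List.finRange n) := rfl
        have hmv : Multiset.map (⇑σ) Finset.univ.val = Finset.univ.val := by
          have := congrArg Finset.val (Finset.map_univ_equiv σ)
          simpa [Finset.map] using this
        rw [List.ofFn_eq_map, ← Multiset.map_coe, ← huv]
        conv_rhs => rw [← hmv]
        rw [Multiset.map_map]
      rw [h1 a, h1 b, h]
    · exact (Tuple.monotone_sort a).sortedLE_ofFn
    · exact (Tuple.monotone_sort b).sortedLE_ofFn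
  refine ⟨Tuple.sort a * (Tuple.sort b)⁻¹, ?_⟩
  funext i
  have := congrFun key ((Tuple.sort b)⁻¹ i)
  simpa using this.symm

lemma perm_matrix_facts (σ : Equiv.Perm (Fin n)) (d : Fin n → ℝ) :
    ∃ P : Matrix (Fin n) (Fin n) ℝ, Pᵀ * P = 1 ∧ P * diagonal d * Pᵀ = diagonal (d ∘ σ) := by
  refine ⟨Matrix.of (fun i j => if σ i = j then 1 else 0), ?_, ?_⟩
  · ext i j
    simp only [Matrix.mul_apply, Matrix.transpose_apply, Matrix.of_apply]
    have := Equiv.sum_comp σ (fun m => (if m = i then (1:ℝ) else 0) * (if m = j then 1 else 0))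
    rw [this]
    rcases eq_or_ne i j with h | h
    · simp [Finset.sum_ite_eq, h, Matrix.one_apply]
    · simp [Finset.sum_ite_eq, h, Matrix.one_apply, Ne.symm h]
  · ext i j
    have hinner : ∀ x, (Matrix.of (fun i j => if σ i = j then (1:ℝ) else 0) * diagonal d) i x
        = if σ i = x then d x else 0 := by
      intro x
      rw [Matrix.mul_diagonal]
      simp only [Matrix.of_apply]
      by_cases h : σ i = x <;> simp [h]
    simp only [Matrix.mul_apply, Matrix.transpose_apply, hinner, Matrix.of_apply]
    rw [Finset.sum_eq_single (σ i)]
    · rcases eq_or_ne i j with h | h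
      · simp [h, Matrix.diagonal_apply]
      · have : σ j ≠ σ i := fun hc => h (σ.injective hc).symm
        simp [Matrix.diagonal_apply, h, this, eq_comm]
    · intro x _ hx
      simp [Ne.symm hx]
    · intro hx
      exact absurd (Finset.mem_univ _) hx

/-- Matrix determinant lemma for `diagonal f - vecMulVec x y` over a field. -/
lemma det_diagonal_sub_vecMulVec {K : Type*} [Field K] (f x y : Fin n → K)
    (hf : ∀ i, f i ≠ 0) :
    (diagonal f - vecMulVec x y).det
      = ∏ i, f i - ∑ i, x i * y i * ∏ j ∈ Finset.univ.erase i, f j := by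
  have h1 : diagonal f - vecMulVec x y
      = diagonal f * (1 - vecMulVec (fun i => x i / f i) y) := by
    rw [Matrix.mul_sub, Matrix.mul_one]
    congr 1
    ext i j
    rw [Matrix.diagonal_mul, vecMulVec_apply, vecMulVec_apply]
    have hfi := hf i
    field_simp
  have h2 : (1 - vecMulVec (fun i => x i / f i) y : Matrix (Fin n) (Fin n) K).det
      = 1 - ∑ i, y i * (x i / f i) := by
    have : (1 - vecMulVec (fun i => x i / f i) y : Matrix (Fin n) (Fin n) K)
        = 1 + Matrix.replicateCol (Fin 1) (fun i => -(x i / f i)) * Matrix.replicateRow (Fin 1) y := by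
      rw [Matrix.vecMulVec_eq (Fin 1) (fun i => x i / f i) y]
      ext i j
      simp [Matrix.sub_apply, Matrix.add_apply, Matrix.mul_apply, Matrix.replicateCol, Matrix.replicateRow]
      ring
    rw [this]; erw [Matrix.det_one_add_replicateCol_mul_replicateRow (ι := Fin 1)]
    simp [dotProduct]
    ring
  rw [h1, Matrix.det_mul, Matrix.det_diagonal, h2, mul_sub, mul_one, Finset.mul_sum]
  congr 1
  apply Finset.sum_congr rfl
  intro i _
  rw [← Finset.mul_prod_erase Finset.univ f (Finset.mem_univ i)]
  have hfi := hf i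
  field_simp

lemma fiber_sum_zero (c e : Fin n → ℝ)
    (h : ∑ i, C (c i) * ∏ j ∈ Finset.univ.erase i, (X + C (e j)) = 0) :
    ∀ i₀ : Fin n, ∑ j ∈ Finset.univ.filter (fun j => e j = e i₀), c j = 0 := by
  intro i₀
  classical
  set lam := e i₀ with hlam
  set S : Finset (Fin n) := Finset.univ.filter (fun j => e j = lam) with hS
  have hi₀S : i₀ ∈ S := by simp [hS, hlam]
  set s := S.card with hscard
  have hs : 1 ≤ s := Finset.card_pos.mpr ⟨i₀, hi₀S⟩
  set Pc : ℝ[X] := ∏ j ∈ Finset.univ.filter (fun j => ¬ e j = lam), (X + C (e j)) with hPc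
  have h1 : ∀ i ∈ S, ∏ j ∈ Finset.univ.erase i, (X + C (e j)) = (X + C lam)^(s-1) * Pc := by
    intro i hiS
    have hei : e i = lam := by simpa [hS] using hiS
    rw [← Finset.prod_filter_mul_prod_filter_not (Finset.univ.erase i) (fun j => e j = lam)]
    congr 1
    · rw [Finset.filter_erase]
      rw [Finset.prod_congr rfl (fun j hj => by
        rw [(Finset.mem_filter.mp (Finset.mem_of_mem_erase hj)).2])]
      rw [Finset.prod_const, Finset.card_erase_of_mem (by simpa [hS] using hiS)]
    · congr 1
      ext j
      simp only [Finset.mem_filter, Finset.mem_erase, Finset.mem_univ, true_and, and_true]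
      exact ⟨fun ⟨_, h2⟩ => h2, fun h2 => ⟨fun hji => h2 (hji ▸ hei), h2⟩⟩
  have h2 : ∀ i ∉ S, ∏ j ∈ Finset.univ.erase i, (X + C (e j))
      = (X + C lam)^s * ∏ j ∈ (Finset.univ.filter (fun j => ¬ e j = lam)).erase i,
          (X + C (e j)) := by
    intro i hiS
    have hei : ¬ e i = lam := by simpa [hS] using hiS
    rw [← Finset.prod_filter_mul_prod_filter_not (Finset.univ.erase i) (fun j => e j = lam)]
    congr 1
    · rw [Finset.filter_erase]
      have : (Finset.univ.filter (fun j => e j = lam)).erase i = S := by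
        rw [← hS]; exact Finset.erase_eq_of_notMem hiS
      rw [Finset.prod_congr this (fun j hj => by
        rw [(Finset.mem_filter.mp (by simpa [hS] using hj : j ∈ S)).2])]
      rw [Finset.prod_const]
    · rw [Finset.filter_erase]
  -- split the sum
  have hsplit := Finset.sum_filter_add_sum_filter_not Finset.univ (fun j => e j = lam)
    (fun i => C (c i) * ∏ j ∈ Finset.univ.erase i, (X + C (e j)))
  rw [h] at hsplit
  have hA : ∑ i ∈ Finset.univ.filter (fun j => e j = lam),
      (C (c i) * ∏ j ∈ Finset.univ.erase i, (X + C (e j)))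
      = ∑ i ∈ Finset.univ.filter (fun j => e j = lam), C (c i) * ((X + C lam)^(s-1) * Pc) :=
    Finset.sum_congr rfl (fun i hi => by rw [h1 i (by simpa [hS] using hi)])
  have hB : ∑ i ∈ Finset.univ.filter (fun j => ¬ e j = lam),
      (C (c i) * ∏ j ∈ Finset.univ.erase i, (X + C (e j)))
      = ∑ i ∈ Finset.univ.filter (fun j => ¬ e j = lam), C (c i) * ((X + C lam)^s *
          ∏ j ∈ (Finset.univ.filter (fun j => ¬ e j = lam)).erase i, (X + C (e j))) :=
    Finset.sum_congr rfl (fun i hi => by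
      rw [h2 i (by simpa [hS] using (Finset.mem_filter.mp hi).2)])
  rw [hA, hB] at hsplit
  have hpow : ((X : ℝ[X]) + C lam)^s = (X + C lam)^(s-1) * (X + C lam) := by
    conv_lhs => rw [show s = (s-1) + 1 from (Nat.succ_pred_eq_of_pos hs).symm]
    rw [pow_succ]
  have hE : (X + C lam)^(s-1) *
      ((∑ i ∈ S, C (c i)) * Pc + (X + C lam) *
        ∑ i ∈ Finset.univ.filter (fun j => ¬ e j = lam), C (c i) *
          ∏ j ∈ (Finset.univ.filter (fun j => ¬ e j = lam)).erase i, (X + C (e j))) = 0 := by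
    rw [← hsplit, hpow, hS]
    rw [mul_add, ← Finset.sum_mul, Finset.mul_sum, Finset.mul_sum]
    refine congrArg₂ (· + ·) ?_ ?_
    · ring
    · apply Finset.sum_congr rfl
      intro i _
      ring
  have hne : ((X : ℝ[X]) + C lam)^(s-1) ≠ 0 := pow_ne_zero _ (X_add_C_ne_zero lam)
  have hE0 := (mul_eq_zero.mp hE).resolve_left hne
  have := congrArg (Polynomial.eval (-lam)) hE0
  simp only [eval_add, eval_mul, eval_X, eval_C, eval_finset_sum, eval_pow, eval_zero,
    neg_add_cancel, zero_mul, add_zero] at this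
  have hPcne : Polynomial.eval (-lam) Pc ≠ 0 := by
    rw [hPc, Polynomial.eval_prod]
    apply Finset.prod_ne_zero_iff.mpr
    intro j hj
    have : ¬ e j = lam := by simpa using hj
    simp only [eval_add, eval_X, eval_C]
    intro hcon
    exact this (by linarith)
  have hsum : (∑ i ∈ S, c i) = 0 := by
    rcases mul_eq_zero.mp this with h' | h'
    · exact h'
    · exact absurd h' hPcne
  simpa [hS, hlam] using hsum

lemma charmatrix_special (a v : Fin n → ℝ) :
    charmatrix (vecMulVec v v - 1 - diagonal a)
      = diagonal (fun i => X + C (1 + a i)) - vecMulVec (fun i => C (v i)) (fun i => C (v i)) := by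
  refine Matrix.ext fun i j => ?_
  rcases eq_or_ne i j with h | h
  · subst h
    rw [charmatrix_apply_eq]
    simp only [Matrix.sub_apply, Matrix.one_apply_eq, diagonal_apply_eq, vecMulVec_apply,
      _root_.map_sub, _root_.map_add, _root_.map_one, _root_.map_mul]
    ring
  · rw [charmatrix_apply_ne _ _ _ h]
    simp only [Matrix.sub_apply, Matrix.one_apply_ne h, diagonal_apply_ne _ h, vecMulVec_apply,
      _root_.map_sub, _root_.map_mul, sub_zero, _root_.map_zero]
    ring

lemma charpoly_special (a v : Fin n → ℝ) :
    (vecMulVec v v - 1 - diagonal a).charpoly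
      = ∏ i, (X + C (1 + a i))
        - ∑ i, C (v i) * C (v i) * ∏ j ∈ Finset.univ.erase i, (X + C (1 + a j)) := by
  set φ := algebraMap ℝ[X] (RatFunc ℝ) with hφ
  have hinj : Function.Injective φ := RatFunc.algebraMap_injective ℝ
  apply hinj
  rw [Matrix.charpoly, charmatrix_special]
  rw [RingHom.map_det, RingHom.mapMatrix_apply]
  have hmap : (diagonal (fun i => X + C (1 + a i))
      - vecMulVec (fun i => C (v i)) (fun i => C (v i))).map φ
      = diagonal (fun i => φ (X + C (1 + a i)))
        - vecMulVec (fun i => φ (C (v i))) (fun i => φ (C (v i))) := by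
    refine Matrix.ext fun i j => ?_
    rcases eq_or_ne i j with h | h <;>
      simp [Matrix.map_apply, Matrix.sub_apply, diagonal_apply, vecMulVec_apply, h,
        _root_.map_sub]
  rw [hmap, det_diagonal_sub_vecMulVec _ _ _ (fun i => by
    apply RatFunc.algebraMap_ne_zero
    exact X_add_C_ne_zero (1 + a i))]
  rw [_root_.map_sub, map_prod, map_sum]
  congr 1
  apply Finset.sum_congr rfl
  intro i _
  rw [_root_.map_mul, _root_.map_mul, map_prod]

lemma exists_block_reflection (a u w : Fin n → ℝ)
    (h : ∀ i : Fin n, ∑ j ∈ Finset.univ.filter (fun j => a j = a i), (u j ^ 2 - w j ^ 2) = 0) :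
    ∃ R : Matrix (Fin n) (Fin n) ℝ,
      Rᵀ = R ∧ R * R = 1 ∧ R * diagonal a = diagonal a * R ∧ R *ᵥ w = u := by
  classical
  set z : Fin n → ℝ := fun i => w i - u i with hz
  set S : Fin n → ℝ := fun i => ∑ j ∈ Finset.univ.filter (fun j => a j = a i), z j ^ 2 with hSdef
  set M : Matrix (Fin n) (Fin n) ℝ :=
    Matrix.of (fun i j => if a i = a j then 2 / S i * (z i * z j) else 0) with hM
  have hfib : ∀ {i j : Fin n}, a i = a j →
      Finset.univ.filter (fun k => a k = a i) = Finset.univ.filter (fun k => a k = a j) := by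
    intro i j hij
    apply Finset.filter_congr
    intro k _
    simp [hij]
  have hSeq : ∀ {i j : Fin n}, a i = a j → S i = S j := fun {i j} hij => by
    rw [hSdef]; simp only; rw [hfib hij]
  have hSz : ∀ i : Fin n, S i = 0 → z i = 0 := by
    intro i hSi
    have hmem : i ∈ Finset.univ.filter (fun k => a k = a i) := by simp
    have := (Finset.sum_eq_zero_iff_of_nonneg (fun j _ => sq_nonneg (z j))).mp hSi i hmem
    exact sq_eq_zero_iff.mp this
  have hkey : ∀ i : Fin n,
      2 * ∑ j ∈ Finset.univ.filter (fun j => a j = a i), z j * w j = S i := by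
    intro i
    have h1 := h i
    rw [Finset.sum_sub_distrib] at h1
    have h2 : 2 * (∑ j ∈ Finset.univ.filter (fun j => a j = a i), z j * w j) - S i
        = ∑ j ∈ Finset.univ.filter (fun j => a j = a i), (w j ^ 2 - u j ^ 2) := by
      rw [hSdef]
      simp only
      rw [Finset.mul_sum, ← Finset.sum_sub_distrib]
      apply Finset.sum_congr rfl
      intro j _
      rw [hz]
      ring
    rw [Finset.sum_sub_distrib] at h2
    linarith
  -- M * M = M + M
  have hMM : M * M = M + M := by
    refine Matrix.ext fun i j => ?_
    rw [Matrix.mul_apply, Matrix.add_apply]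
    rcases eq_or_ne (a i) (a j) with hij | hij
    · have hcongr : ∀ k : Fin n, M i k * M k j
          = if a k = a i then 2 / S i * (2 / S i) * (z i * z j) * z k ^ 2 else 0 := by
        intro k
        rcases eq_or_ne (a k) (a i) with hk | hk
        · simp only [hM, Matrix.of_apply, hk.symm, if_true, hk.trans hij, if_true,
            hSeq hk]
          ring
        · have hneg : ¬ a i = a k := fun hc => hk (Eq.symm hc)
          have hneg2 : ¬ a k = a j := fun hc => hk (hc.trans hij.symm)
          simp only [hM, Matrix.of_apply, if_neg hneg, zero_mul, if_neg hk]
      rw [Finset.sum_congr rfl (fun k _ => hcongr k), ← Finset.sum_filter,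
        ← Finset.mul_sum]
      have hfold : ∑ k ∈ Finset.univ.filter (fun k => a k = a i), z k ^ 2 = S i := rfl
      rw [hfold]
      simp only [hM, Matrix.of_apply, if_pos hij]
      rcases eq_or_ne (S i) 0 with hS0 | hS0
      · rw [hS0, hSz i hS0]
        simp
      · field_simp
        ring
    · have hcongr : ∀ k : Fin n, M i k * M k j = 0 := by
        intro k
        rcases eq_or_ne (a i) (a k) with hk | hk
        · have hneg2 : ¬ a k = a j := fun hc => hij ((hk.trans hc))
          simp only [hM, Matrix.of_apply, if_neg hneg2, mul_zero]
        · simp only [hM, Matrix.of_apply, if_neg hk, zero_mul]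
      rw [Finset.sum_congr rfl (fun k _ => hcongr k), Finset.sum_const_zero]
      simp [hM, if_neg hij]
  have hMsymm : Mᵀ = M := by
    refine Matrix.ext fun i j => ?_
    rw [Matrix.transpose_apply]
    rcases eq_or_ne (a i) (a j) with hij | hij
    · simp only [hM, Matrix.of_apply, if_pos hij, if_pos hij.symm, hSeq hij]
      ring
    · simp only [hM, Matrix.of_apply, if_neg hij, if_neg (Ne.symm hij)]
  have hMD : M * diagonal a = diagonal a * M := by
    refine Matrix.ext fun i j => ?_
    rw [Matrix.mul_diagonal, Matrix.diagonal_mul]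
    rcases eq_or_ne (a i) (a j) with hij | hij
    · rw [hij, mul_comm]
    · simp [hM, if_neg hij]
  have hMw : M *ᵥ w = z := by
    funext i
    rw [Matrix.mulVec, dotProduct]
    have hcongr : ∀ j : Fin n, M i j * w j
        = if a j = a i then 2 / S i * z i * (z j * w j) else 0 := by
      intro j
      rcases eq_or_ne (a j) (a i) with hj | hj
      · simp only [hM, Matrix.of_apply, if_pos hj.symm, if_pos hj]
        ring
      · have hneg : ¬ a i = a j := fun hc => hj (Eq.symm hc)
        simp only [hM, Matrix.of_apply, if_neg hneg, if_neg hj, zero_mul]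
    rw [Finset.sum_congr rfl (fun j _ => hcongr j), ← Finset.sum_filter, ← Finset.mul_sum]
    have hhalf : ∑ j ∈ Finset.univ.filter (fun j => a j = a i), z j * w j = S i / 2 := by
      have := hkey i; linarith
    rw [hhalf]
    rcases eq_or_ne (S i) 0 with hS0 | hS0
    · rw [hS0, hSz i hS0]; simp
    · field_simp
  refine ⟨1 - M, ?_, ?_, ?_, ?_⟩
  · rw [Matrix.transpose_sub, Matrix.transpose_one, hMsymm]
  · have expand : (1 - M) * (1 - M) = 1 - M - M + M * M := by noncomm_ring
    rw [expand, hMM]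
    abel
  · rw [Matrix.sub_mul, Matrix.mul_sub, Matrix.one_mul, Matrix.mul_one, hMD]
  · rw [Matrix.sub_mulVec, Matrix.one_mulVec, hMw]
    funext i
    rw [hz]
    simp

lemma adjCharPoly_eq (G : SimpleGraph (Fin n)) : adjCharPoly G = (adjMat G).charpoly := rfl

lemma adjMat_apply (G : SimpleGraph (Fin n)) (i j : Fin n) :
    adjMat G i j = if G.Adj i j then 1 else 0 := by
  rw [adjMat]
  convert SimpleGraph.adjMatrix_apply (G := G) i j (α := ℝ) using 2

lemma adjMat_symm (G : SimpleGraph (Fin n)) : (adjMat G)ᵀ = adjMat G := by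
  refine Matrix.ext fun i j => ?_
  rw [Matrix.transpose_apply, adjMat_apply, adjMat_apply]
  simp only [G.adj_comm i j]

lemma adjMat_compl (G : SimpleGraph (Fin n)) :
    adjMat Gᶜ = vecMulVec (fun _ => (1:ℝ)) (fun _ => 1) - 1 - adjMat G := by
  refine Matrix.ext fun i j => ?_
  rw [adjMat_apply, Matrix.sub_apply, Matrix.sub_apply, vecMulVec_apply, adjMat_apply]
  rcases eq_or_ne i j with h | h
  · subst h
    simp [SimpleGraph.compl_adj]
  · rcases Classical.em (G.Adj i j) with ha | ha <;>
      simp [SimpleGraph.compl_adj, h, ha, Matrix.one_apply_ne h]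

/-- conjugating the all-ones matrix by a regular orthogonal matrix. -/
lemma conj_J {Q : Matrix (Fin n) (Fin n) ℝ} (hQ : Qᵀ * Q = 1)
    (hrow : Q *ᵥ (fun _ => (1:ℝ)) = fun _ => 1) :
    Qᵀ * vecMulVec (fun _ => (1:ℝ)) (fun _ => 1) * Q = vecMulVec (fun _ => 1) (fun _ => 1) := by
  rw [mul_vecMulVec_mul]
  have h1 : Qᵀ *ᵥ (fun _ => (1:ℝ)) = fun _ => 1 := by
    conv_lhs => rw [← hrow]
    rw [Matrix.mulVec_mulVec, hQ, Matrix.one_mulVec]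
  have h2 : (fun _ => (1:ℝ)) ᵥ* Q = fun _ => 1 := by
    have := Matrix.vecMul_transpose (A := Qᵀ) (x := fun _ => (1:ℝ))
    rw [Matrix.transpose_transpose] at this
    rw [this, h1]
  rw [h1, h2]

end JNAux

section JNMain

open Polynomial Finset
open scoped Classical

/-- **Johnson–Newman.** Two graphs on `n` vertices are generalized cospectral iff there is a
regular orthogonal matrix `Q` (orthogonal, with all row sums equal to `1`) with
`Qᵀ A(G) Q = A(H)`. -/
theorem johnson_newman {n : ℕ} (G H : SimpleGraph (Fin n)) :
    GenCospectral G H ↔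
      ∃ Q : Matrix (Fin n) (Fin n) ℝ,
        Qᵀ * Q = 1 ∧ (∀ i, ∑ j, Q i j = 1) ∧ Qᵀ * adjMat G * Q = adjMat H := by
  constructor
  · -- forward direction
    rintro ⟨hc1, hc2⟩
    rw [Cospectral, adjCharPoly_eq, adjCharPoly_eq] at hc1 hc2
    obtain ⟨U, dA, hU, hAU⟩ := exists_spectral (adjMat_symm G)
    obtain ⟨V, dB, hV, hBV⟩ := exists_spectral (adjMat_symm H)
    have hUU : U * Uᵀ = 1 := mul_eq_one_comm.mp hU
    have hVV : V * Vᵀ = 1 := mul_eq_one_comm.mp hV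
    -- match eigenvalues
    have hchA : (adjMat G).charpoly = ∏ i, (X - C (dA i)) := by
      rw [hAU, charpoly_orth_conj hU, _root_.charpoly_diagonal]
    have hchB : (adjMat H).charpoly = ∏ i, (X - C (dB i)) := by
      rw [hBV, charpoly_orth_conj hV, _root_.charpoly_diagonal]
    have hprod : ∏ i, (X - C (dA i)) = ∏ i, (X - C (dB i)) := by
      rw [← hchA, ← hchB, hc1]
    obtain ⟨σ, hσ⟩ := exists_perm_comp (a := dA) (b := dB)
      (multiset_eq_of_prod_X_sub_C (a := dA) (b := dB) hprod)
    obtain ⟨P, hP, hPD⟩ := perm_matrix_facts σ dA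
    have hPP : P * Pᵀ = 1 := mul_eq_one_comm.mp hP
    obtain ⟨W, hWdef⟩ : ∃ W : Matrix (Fin n) (Fin n) ℝ, W = V * P := ⟨_, rfl⟩
    have hW : Wᵀ * W = 1 := by
      rw [hWdef, Matrix.transpose_mul, Matrix.mul_assoc, ← Matrix.mul_assoc Vᵀ V P, hV,
        Matrix.one_mul, hP]
    have hWW : W * Wᵀ = 1 := mul_eq_one_comm.mp hW
    have hBW : adjMat H = W * diagonal dA * Wᵀ := by
      rw [hWdef, Matrix.transpose_mul, hBV, hσ, ← hPD]
      simp only [Matrix.mul_assoc]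
    -- the projections of the all-ones vector
    obtain ⟨u, hu⟩ : ∃ u : Fin n → ℝ, u = Uᵀ *ᵥ (fun _ => 1) := ⟨_, rfl⟩
    obtain ⟨w, hw⟩ : ∃ w : Fin n → ℝ, w = Wᵀ *ᵥ (fun _ => 1) := ⟨_, rfl⟩
    have hUu : U *ᵥ u = fun _ => 1 := by
      rw [hu, Matrix.mulVec_mulVec, hUU, Matrix.one_mulVec]
    have hWw : W *ᵥ w = fun _ => 1 := by
      rw [hw, Matrix.mulVec_mulVec, hWW, Matrix.one_mulVec]
    have hconj : ∀ (Y : Matrix (Fin n) (Fin n) ℝ) (y : Fin n → ℝ), Yᵀ * Y = 1 →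
        Y *ᵥ y = (fun _ => 1) →
        Y * (vecMulVec y y - 1 - diagonal dA) * Yᵀ
          = vecMulVec (fun _ => (1:ℝ)) (fun _ => 1) - 1 - Y * diagonal dA * Yᵀ := by
      intro Y y hY hYy
      rw [Matrix.mul_sub, Matrix.mul_sub, Matrix.sub_mul, Matrix.sub_mul, Matrix.mul_one,
        mul_eq_one_comm.mp hY, mul_vecMulVec_mul]
      have : y ᵥ* Yᵀ = Y *ᵥ y := by
        rw [Matrix.vecMul_transpose]
      rw [this, hYy]
    have hGc : adjMat Gᶜ = U * (vecMulVec u u - 1 - diagonal dA) * Uᵀ := by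
      rw [hconj U u hU hUu, adjMat_compl, ← hAU]
    have hHc : adjMat Hᶜ = W * (vecMulVec w w - 1 - diagonal dA) * Wᵀ := by
      rw [hconj W w hW hWw, adjMat_compl, ← hBW]
    have hcc : (vecMulVec u u - 1 - diagonal dA).charpoly
        = (vecMulVec w w - 1 - diagonal dA).charpoly := by
      rw [← charpoly_orth_conj hU (M := vecMulVec u u - 1 - diagonal dA),
        ← charpoly_orth_conj hW (M := vecMulVec w w - 1 - diagonal dA), ← hGc, ← hHc, hc2]
    rw [charpoly_special, charpoly_special] at hcc
    have hS : ∑ i, C (u i) * C (u i) * ∏ j ∈ Finset.univ.erase i, (X + C (1 + dA j))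
        = ∑ i, C (w i) * C (w i) * ∏ j ∈ Finset.univ.erase i, (X + C (1 + dA j)) :=
      sub_right_inj.mp hcc
    have hzero : ∑ i, C (u i ^ 2 - w i ^ 2) * ∏ j ∈ Finset.univ.erase i, (X + C (1 + dA j))
        = 0 := by
      have hterm : ∀ i : Fin n, C (u i ^ 2 - w i ^ 2)
          * ∏ j ∈ Finset.univ.erase i, (X + C (1 + dA j))
          = C (u i) * C (u i) * ∏ j ∈ Finset.univ.erase i, (X + C (1 + dA j))
            - C (w i) * C (w i) * ∏ j ∈ Finset.univ.erase i, (X + C (1 + dA j)) := by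
        intro i
        rw [map_sub, ← sq (C (u i)), ← sq (C (w i)), ← map_pow, ← map_pow]
        ring
      rw [Finset.sum_congr rfl (fun i _ => hterm i), Finset.sum_sub_distrib, hS, sub_self]
    have hfiber := fiber_sum_zero (fun i => u i ^ 2 - w i ^ 2) (fun i => 1 + dA i) hzero
    have hfiber' : ∀ i : Fin n,
        ∑ j ∈ Finset.univ.filter (fun j => dA j = dA i), (u j ^ 2 - w j ^ 2) = 0 := by
      intro i
      have this1 : ∑ j ∈ Finset.univ.filter (fun j => (1:ℝ) + dA j = 1 + dA i),
          (u j ^ 2 - w j ^ 2) = 0 := hfiber i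
      have heq : Finset.univ.filter (fun j => (1:ℝ) + dA j = 1 + dA i)
          = Finset.univ.filter (fun j => dA j = dA i) := by
        apply Finset.filter_congr
        intro k _
        constructor
        · intro hk; linarith
        · intro hk; rw [hk]
      rwa [heq] at this1
    obtain ⟨R, hRs, hRR, hRD, hRw⟩ := exists_block_reflection dA u w hfiber'
    refine ⟨U * R * Wᵀ, ?_, ?_, ?_⟩
    · rw [Matrix.transpose_mul, Matrix.transpose_mul, Matrix.transpose_transpose, hRs]
      simp only [Matrix.mul_assoc]
      rw [← Matrix.mul_assoc Uᵀ U (R * Wᵀ), hU, Matrix.one_mul,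
        ← Matrix.mul_assoc R R Wᵀ, hRR, Matrix.one_mul, hWW]
    · intro i
      have h3 : (U * R * Wᵀ) *ᵥ (fun _ => (1:ℝ)) = fun _ => 1 := by
        have e1 : (U * R * Wᵀ) *ᵥ (fun _ => (1:ℝ)) = U *ᵥ (R *ᵥ (Wᵀ *ᵥ (fun _ => 1))) := by
          rw [Matrix.mulVec_mulVec, Matrix.mulVec_mulVec]
        rw [e1, ← hw, hRw, hUu]
      have h4 := congrFun h3 i
      simpa [Matrix.mulVec, dotProduct] using h4
    · rw [Matrix.transpose_mul, Matrix.transpose_mul, Matrix.transpose_transpose, hRs, hAU, hBW]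
      simp only [Matrix.mul_assoc]
      rw [← Matrix.mul_assoc Uᵀ U (R * Wᵀ), hU, Matrix.one_mul]
      rw [← Matrix.mul_assoc Uᵀ U (diagonal dA * (R * Wᵀ)), hU, Matrix.one_mul]
      rw [← Matrix.mul_assoc R (diagonal dA) (R * Wᵀ), hRD,
        Matrix.mul_assoc (diagonal dA) R (R * Wᵀ), ← Matrix.mul_assoc R R Wᵀ, hRR,
        Matrix.one_mul]
  · -- backward direction
    rintro ⟨Q, hQ, hrow, hQA⟩
    have hQQ : Q * Qᵀ = 1 := mul_eq_one_comm.mp hQ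
    have hrow' : Q *ᵥ (fun _ => (1:ℝ)) = fun _ => 1 := by
      funext i
      simpa [Matrix.mulVec, dotProduct] using hrow i
    have hconj : ∀ M : Matrix (Fin n) (Fin n) ℝ, (Qᵀ * M * Q).charpoly = M.charpoly := by
      intro M
      have := charpoly_orth_conj (Q := Qᵀ) (M := M)
        (by rw [Matrix.transpose_transpose]; exact hQQ)
      rwa [Matrix.transpose_transpose] at this
    constructor
    · show adjCharPoly G = adjCharPoly H
      rw [adjCharPoly_eq, adjCharPoly_eq, ← hQA, hconj]
    · show adjCharPoly Gᶜ = adjCharPoly Hᶜ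
      rw [adjCharPoly_eq, adjCharPoly_eq]
      have hcomp : Qᵀ * adjMat Gᶜ * Q = adjMat Hᶜ := by
        rw [adjMat_compl G, adjMat_compl H, Matrix.mul_sub, Matrix.mul_sub, Matrix.sub_mul,
          Matrix.sub_mul, Matrix.mul_one, conj_J hQ hrow', hQA, hQ]
      rw [← hcomp, hconj]

end JNMain
end

section
/- Let G₁ and G₂ be generalized cospectral graphs on the same number of vertices. Then for any finite simple graph H: (i) the disjoint unions G₁ ∪ H and G₂ ∪ H are generalized cospectral, and (ii) the joins G₁ ∨ H and G₂ ∨ H are generalized cospectral. -/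
open SimpleGraph

/-- The join `G ∨ H` of two graphs: their disjoint union `G ⊕g H` together with an edge
between every vertex of `G` and every vertex of `H`. -/
def joinG {α β : Type} (G : SimpleGraph α) (H : SimpleGraph β) : SimpleGraph (α ⊕ β) :=
  (G ⊕g H) ⊔ SimpleGraph.fromRel (fun x y => x.isLeft ∧ y.isRight)


open Matrix Polynomial

namespace GCAux

variable {ι κ : Type} [Fintype ι] [DecidableEq ι] [Fintype κ] [DecidableEq κ]

/-- all-ones matrix -/
def J (ι κ : Type) : Matrix ι κ ℝ := Matrix.of fun _ _ => 1

/-- adjacency matrix with classical decidability -/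
noncomputable def adjM {V : Type} [Fintype V] [DecidableEq V] (G : SimpleGraph V) :
    Matrix V V ℝ :=
  letI := Classical.decRel G.Adj
  G.adjMatrix ℝ

lemma adjM_apply {V : Type} [Fintype V] [DecidableEq V] (G : SimpleGraph V)
    [DecidableRel G.Adj] (i j : V) :
    adjM G i j = if G.Adj i j then 1 else 0 := by
  by_cases h : G.Adj i j <;> simp [adjM, SimpleGraph.adjMatrix, h]

lemma eval_charpoly (M : Matrix ι ι ℝ) (x : ℝ) :
    M.charpoly.eval x = (x • (1 : Matrix ι ι ℝ) - M).det := by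
  rw [Matrix.charpoly, ← Polynomial.coe_evalRingHom, RingHom.map_det]
  congr 1
  ext i j
  by_cases h : i = j
  · subst h
    simp [charmatrix_apply_eq, Matrix.one_apply, Matrix.sub_apply, Matrix.smul_apply]
  · simp [charmatrix_apply_ne _ _ _ h, Matrix.one_apply_ne h, Matrix.sub_apply,
      Matrix.smul_apply]


lemma adjM_compl {V : Type} [Fintype V] [DecidableEq V] (G : SimpleGraph V) :
    adjM Gᶜ = J V V - 1 - adjM G := by
  classical
  ext i j
  simp only [Matrix.sub_apply, Matrix.one_apply, J, Matrix.of_apply, adjM_apply, compl_adj]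
  by_cases h : i = j
  · subst h; simp
  · by_cases hadj : G.Adj i j <;> simp [h, hadj]

lemma adjM_sum (G : SimpleGraph ι) (H : SimpleGraph κ) :
    adjM (G ⊕g H) = Matrix.fromBlocks (adjM G) 0 0 (adjM H) := by
  classical
  ext i j
  cases i <;> cases j <;>
    simp [adjM_apply, Matrix.fromBlocks, SimpleGraph.sum_adj]

lemma adjM_join (G : SimpleGraph ι) (H : SimpleGraph κ) :
    adjM (joinG G H) = Matrix.fromBlocks (adjM G) (J ι κ) (J κ ι) (adjM H) := by
  classical
  ext i j
  cases i <;> cases j <;>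
    simp [adjM_apply, Matrix.fromBlocks, joinG, SimpleGraph.sum_adj, J, fromRel_adj]

lemma adjM_sum_compl (G : SimpleGraph ι) (H : SimpleGraph κ) :
    adjM (G ⊕g H)ᶜ = Matrix.fromBlocks (adjM Gᶜ) (J ι κ) (J κ ι) (adjM Hᶜ) := by
  classical
  ext i j
  cases i <;> cases j <;>
    simp [adjM_apply, Matrix.fromBlocks, SimpleGraph.sum_adj, J, compl_adj]

lemma adjM_join_compl (G : SimpleGraph ι) (H : SimpleGraph κ) :
    adjM (joinG G H)ᶜ = Matrix.fromBlocks (adjM Gᶜ) 0 0 (adjM Hᶜ) := by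
  classical
  ext i j
  cases i <;> cases j <;>
    simp [adjM_apply, Matrix.fromBlocks, joinG, SimpleGraph.sum_adj, fromRel_adj, compl_adj] <;>
    try (apply if_congr (by tauto) rfl rfl)

lemma smul_J_eq (t : ℝ) :
    t • J ι κ = Matrix.replicateCol Unit (t • fun _ => (1:ℝ)) * Matrix.replicateRow Unit (fun _ => (1:ℝ)) := by
  rw [← vecMulVec_eq]
  ext i j
  simp [J, vecMulVec_apply]

lemma det_add_smul_J (M : Matrix ι ι ℝ) (h : M.det ≠ 0) (t : ℝ) :
    (M + t • J ι ι).det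
      = M.det * (1 + t * ((fun _ => (1:ℝ)) ⬝ᵥ (M⁻¹ *ᵥ fun _ => (1:ℝ)))) := by
  have h' : IsUnit M.det := isUnit_iff_ne_zero.2 h
  have e1 : M + t • J ι ι = M * (1 + M⁻¹ * (t • J ι ι)) := by
    rw [Matrix.mul_add, Matrix.mul_one, ← Matrix.mul_assoc, Matrix.mul_nonsing_inv _ h',
      Matrix.one_mul]
  rw [e1, det_mul]
  congr 1
  rw [smul_J_eq, ← Matrix.mul_assoc, ← Matrix.replicateCol_mulVec, det_one_add_replicateCol_mul_replicateRow]
  simp [Matrix.mulVec_smul, dotProduct_smul, smul_eq_mul]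

lemma key (A₁ A₂ : Matrix ι ι ℝ)
    (h0 : ∀ x : ℝ, (x • 1 - A₁).det = (x • 1 - A₂).det)
    (h1 : ∀ x : ℝ, (x • 1 - A₁ + J ι ι).det = (x • 1 - A₂ + J ι ι).det)
    (x t : ℝ) (hx : (x • (1 : Matrix ι ι ℝ) - A₁).det ≠ 0) :
    (x • 1 - A₁ + t • J ι ι).det = (x • 1 - A₂ + t • J ι ι).det := by
  have hx2 : (x • (1 : Matrix ι ι ℝ) - A₂).det ≠ 0 := by rw [← h0]; exact hx
  have d1 := det_add_smul_J (x • 1 - A₁) hx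
  have d2 := det_add_smul_J (x • 1 - A₂) hx2
  have h1' := h1 x
  rw [show (x • (1 : Matrix ι ι ℝ) - A₁ + J ι ι) = (x • 1 - A₁ + (1:ℝ) • J ι ι) by
        rw [one_smul],
      show (x • (1 : Matrix ι ι ℝ) - A₂ + J ι ι) = (x • 1 - A₂ + (1:ℝ) • J ι ι) by
        rw [one_smul], d1 1, d2 1, ← h0 x] at h1'
  have hs := mul_left_cancel₀ hx h1'
  rw [d1 t, d2 t, ← h0 x]
  congr 1
  have : ((fun _ => (1:ℝ)) ⬝ᵥ ((x • 1 - A₁)⁻¹ *ᵥ fun _ => (1:ℝ)))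
      = ((fun _ => (1:ℝ)) ⬝ᵥ ((x • 1 - A₂)⁻¹ *ᵥ fun _ => (1:ℝ))) := by linarith
  rw [this]

lemma J_mul_J (C : Matrix κ κ ℝ) :
    J ι κ * C * J κ ι = (∑ k, ∑ l, C k l) • J ι ι := by
  ext i j
  simp only [Matrix.mul_apply, J, Matrix.of_apply, Matrix.smul_apply, smul_eq_mul, one_mul,
    mul_one]
  rw [Finset.sum_comm]

lemma join_det (A : Matrix ι ι ℝ) (B : Matrix κ κ ℝ) (x : ℝ)
    (hB : (x • (1 : Matrix κ κ ℝ) - B).det ≠ 0) :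
    (x • (1 : Matrix (ι ⊕ κ) (ι ⊕ κ) ℝ) - Matrix.fromBlocks A (J ι κ) (J κ ι) B).det
      = (x • (1 : Matrix κ κ ℝ) - B).det *
        ((x • 1 - A) + (-(∑ k, ∑ l, (x • (1 : Matrix κ κ ℝ) - B)⁻¹ k l)) • J ι ι).det := by
  have hb : Invertible (x • (1 : Matrix κ κ ℝ) - B) :=
    (x • 1 - B).invertibleOfIsUnitDet (isUnit_iff_ne_zero.2 hB)
  have e0 : x • (1 : Matrix (ι ⊕ κ) (ι ⊕ κ) ℝ) - Matrix.fromBlocks A (J ι κ) (J κ ι) B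
      = Matrix.fromBlocks (x • 1 - A) (-(J ι κ)) (-(J κ ι)) (x • 1 - B) := by
    ext i j
    cases i <;> cases j <;>
      simp [Matrix.fromBlocks, Matrix.one_apply, J]
  rw [e0, det_fromBlocks₂₂]
  congr 1
  rw [invOf_eq_nonsing_inv, Matrix.neg_mul, Matrix.mul_neg, Matrix.neg_mul, neg_neg,
    J_mul_J, sub_eq_add_neg, neg_smul]

lemma infinite_good (M : Matrix ι ι ℝ) (N : Matrix κ κ ℝ) :
    {x : ℝ | (x • (1 : Matrix ι ι ℝ) - M).det ≠ 0 ∧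
      (x • (1 : Matrix κ κ ℝ) - N).det ≠ 0}.Infinite := by
  have h1 : {x : ℝ | (x • (1 : Matrix ι ι ℝ) - M).det = 0}.Finite := by
    have e : {x : ℝ | (x • (1 : Matrix ι ι ℝ) - M).det = 0} = {x | M.charpoly.IsRoot x} := by
      ext x
      simp [Polynomial.IsRoot, eval_charpoly]
    rw [e]
    exact Polynomial.finite_setOf_isRoot M.charpoly_monic.ne_zero
  have h2 : {x : ℝ | (x • (1 : Matrix κ κ ℝ) - N).det = 0}.Finite := by
    have e : {x : ℝ | (x • (1 : Matrix κ κ ℝ) - N).det = 0} = {x | N.charpoly.IsRoot x} := by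
      ext x
      simp [Polynomial.IsRoot, eval_charpoly]
    rw [e]
    exact Polynomial.finite_setOf_isRoot N.charpoly_monic.ne_zero
  have e : {x : ℝ | (x • (1 : Matrix ι ι ℝ) - M).det ≠ 0 ∧
      (x • (1 : Matrix κ κ ℝ) - N).det ≠ 0}
      = ({x : ℝ | (x • (1 : Matrix ι ι ℝ) - M).det = 0} ∪
         {x : ℝ | (x • (1 : Matrix κ κ ℝ) - N).det = 0})ᶜ := by
    ext x
    simp [not_or]
  rw [e]
  exact Set.Finite.infinite_compl (h1.union h2)

lemma join_charpoly (A₁ A₂ : Matrix ι ι ℝ) (B : Matrix κ κ ℝ)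
    (h0 : ∀ x : ℝ, (x • 1 - A₁).det = (x • 1 - A₂).det)
    (h1 : ∀ x : ℝ, (x • 1 - A₁ + J ι ι).det = (x • 1 - A₂ + J ι ι).det) :
    (Matrix.fromBlocks A₁ (J ι κ) (J κ ι) B).charpoly
      = (Matrix.fromBlocks A₂ (J ι κ) (J κ ι) B).charpoly := by
  apply Polynomial.eq_of_infinite_eval_eq
  refine (infinite_good A₁ B).mono ?_
  rintro x ⟨hx1, hx2⟩
  simp only [Set.mem_setOf_eq]
  rw [eval_charpoly, eval_charpoly, join_det _ _ _ hx2, join_det _ _ _ hx2,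
    key A₁ A₂ h0 h1 x _ hx1]

end GCAux

/-- If `G₁` and `G₂` are generalized cospectral, then for any graph `H`, the disjoint unions
`G₁ ∪ H` and `G₂ ∪ H` are generalized cospectral, and so are the joins `G₁ ∨ H` and
`G₂ ∨ H`. -/
theorem genCospectral_sum_and_join {n m : ℕ} (G₁ G₂ : SimpleGraph (Fin n))
    (H : SimpleGraph (Fin m)) (h : GenCospectral G₁ G₂) :
    GenCospectral (G₁ ⊕g H) (G₂ ⊕g H) ∧ GenCospectral (joinG G₁ H) (joinG G₂ H) := by
  classical
  obtain ⟨hc, hcc⟩ := h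
  have hcp : (GCAux.adjM G₁).charpoly = (GCAux.adjM G₂).charpoly := hc
  have hcpc : (GCAux.adjM G₁ᶜ).charpoly = (GCAux.adjM G₂ᶜ).charpoly := hcc
  have h0 : ∀ x : ℝ, (x • 1 - GCAux.adjM G₁).det = (x • 1 - GCAux.adjM G₂).det := fun x => by
    rw [← GCAux.eval_charpoly, ← GCAux.eval_charpoly, hcp]
  have h0c : ∀ x : ℝ, (x • 1 - GCAux.adjM G₁ᶜ).det = (x • 1 - GCAux.adjM G₂ᶜ).det := fun x => by
    rw [← GCAux.eval_charpoly, ← GCAux.eval_charpoly, hcpc]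
  have hJ1 : ∀ z : ℝ, (z • 1 - GCAux.adjM G₁ + GCAux.J (Fin n) (Fin n)).det
      = (z • 1 - GCAux.adjM G₂ + GCAux.J (Fin n) (Fin n)).det := by
    intro z
    have e : ∀ A : Matrix (Fin n) (Fin n) ℝ,
        z • 1 - A + GCAux.J (Fin n) (Fin n)
          = -((-z - 1) • (1 : Matrix (Fin n) (Fin n) ℝ)
              - (GCAux.J (Fin n) (Fin n) - 1 - A)) := by
      intro A
      module
    rw [e (GCAux.adjM G₁), e (GCAux.adjM G₂), ← GCAux.adjM_compl, ← GCAux.adjM_compl,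
      Matrix.det_neg, Matrix.det_neg, h0c (-z - 1)]
  have hJ1c : ∀ z : ℝ, (z • 1 - GCAux.adjM G₁ᶜ + GCAux.J (Fin n) (Fin n)).det
      = (z • 1 - GCAux.adjM G₂ᶜ + GCAux.J (Fin n) (Fin n)).det := by
    intro z
    have e : ∀ A : Matrix (Fin n) (Fin n) ℝ,
        z • 1 - (GCAux.J (Fin n) (Fin n) - 1 - A) + GCAux.J (Fin n) (Fin n)
          = -((-z - 1) • (1 : Matrix (Fin n) (Fin n) ℝ) - A) := by
      intro A
      module
    rw [GCAux.adjM_compl, GCAux.adjM_compl, e (GCAux.adjM G₁), e (GCAux.adjM G₂),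
      Matrix.det_neg, Matrix.det_neg, h0 (-z - 1)]
  refine ⟨⟨?_, ?_⟩, ?_, ?_⟩
  · show (GCAux.adjM (G₁ ⊕g H)).charpoly = (GCAux.adjM (G₂ ⊕g H)).charpoly
    rw [GCAux.adjM_sum, GCAux.adjM_sum, Matrix.charpoly_fromBlocks_zero₁₂,
      Matrix.charpoly_fromBlocks_zero₁₂, hcp]
  · show (GCAux.adjM (G₁ ⊕g H)ᶜ).charpoly = (GCAux.adjM (G₂ ⊕g H)ᶜ).charpoly
    rw [GCAux.adjM_sum_compl, GCAux.adjM_sum_compl]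
    exact GCAux.join_charpoly _ _ _ h0c hJ1c
  · show (GCAux.adjM (joinG G₁ H)).charpoly = (GCAux.adjM (joinG G₂ H)).charpoly
    rw [GCAux.adjM_join, GCAux.adjM_join]
    exact GCAux.join_charpoly _ _ _ h0 hJ1
  · show (GCAux.adjM (joinG G₁ H)ᶜ).charpoly = (GCAux.adjM (joinG G₂ H)ᶜ).charpoly
    rw [GCAux.adjM_join_compl, GCAux.adjM_join_compl, Matrix.charpoly_fromBlocks_zero₁₂,
      Matrix.charpoly_fromBlocks_zero₁₂, hcpc]
end

section
/- There exist two finite simple graphs G and H on 9 vertices such that G and H are generalized cospectral, G and H are not isomorphic, G is a cograph (contains no induced P4), and H is not a cograph (contains an induced P4). -/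
open SimpleGraph

def AZ : Matrix (Fin 9) (Fin 9) ℤ :=
  !![0, 1, 1, 0, 0, 0, 0, 0, 0;
    1, 0, 1, 0, 0, 0, 0, 0, 0;
    1, 1, 0, 0, 0, 0, 0, 0, 0;
    0, 0, 0, 0, 1, 1, 1, 1, 1;
    0, 0, 0, 1, 0, 0, 0, 0, 0;
    0, 0, 0, 1, 0, 0, 1, 1, 1;
    0, 0, 0, 1, 0, 1, 0, 0, 0;
    0, 0, 0, 1, 0, 1, 0, 0, 0;
    0, 0, 0, 1, 0, 1, 0, 0, 0]

def BZ : Matrix (Fin 9) (Fin 9) ℤ :=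
  !![0, 0, 0, 0, 0, 1, 1, 1, 1;
    0, 0, 1, 1, 1, 0, 0, 0, 1;
    0, 1, 0, 1, 1, 0, 0, 0, 0;
    0, 1, 1, 0, 1, 0, 0, 0, 0;
    0, 1, 1, 1, 0, 0, 0, 0, 0;
    1, 0, 0, 0, 0, 0, 0, 0, 0;
    1, 0, 0, 0, 0, 0, 0, 0, 0;
    1, 0, 0, 0, 0, 0, 0, 0, 0;
    1, 1, 0, 0, 0, 0, 0, 0, 0]

def AcZ : Matrix (Fin 9) (Fin 9) ℤ :=
  !![0, 0, 0, 1, 1, 1, 1, 1, 1;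
    0, 0, 0, 1, 1, 1, 1, 1, 1;
    0, 0, 0, 1, 1, 1, 1, 1, 1;
    1, 1, 1, 0, 0, 0, 0, 0, 0;
    1, 1, 1, 0, 0, 1, 1, 1, 1;
    1, 1, 1, 0, 1, 0, 0, 0, 0;
    1, 1, 1, 0, 1, 0, 0, 1, 1;
    1, 1, 1, 0, 1, 0, 1, 0, 1;
    1, 1, 1, 0, 1, 0, 1, 1, 0]

def BcZ : Matrix (Fin 9) (Fin 9) ℤ :=
  !![0, 1, 1, 1, 1, 0, 0, 0, 0;
    1, 0, 0, 0, 0, 1, 1, 1, 0;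
    1, 0, 0, 0, 0, 1, 1, 1, 1;
    1, 0, 0, 0, 0, 1, 1, 1, 1;
    1, 0, 0, 0, 0, 1, 1, 1, 1;
    0, 1, 1, 1, 1, 0, 1, 1, 1;
    0, 1, 1, 1, 1, 1, 0, 1, 1;
    0, 1, 1, 1, 1, 1, 1, 0, 1;
    0, 0, 1, 1, 1, 1, 1, 1, 0]

def S1Z : Matrix (Fin 9) (Fin 9) ℤ :=
  !![36, 36, 36, 9, -3, -6, 4, 4, 4;
    0, 0, 0, 3, 15, 36, 8, 8, 8;
    42, -36, -24, 21, 3, 9, 11, 11, 11;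
    -48, 12, 18, 21, 3, 9, 11, 11, 11;
    -12, 6, -12, 21, 3, 9, 11, 11, 11;
    18, 18, 18, -3, 5, 7, -27, -9, 33;
    18, 18, 18, -3, 5, 7, 21, -6, -18;
    18, 18, 18, -3, 5, 7, 3, 12, -18;
    18, 18, 18, 12, -6, 0, 6, 6, 6]

def N1Z : Matrix (Fin 9) (Fin 9) ℤ :=
  !![9658211904, 0, 13023952416, -19901769984, 2048711616, 4829105952, 4829105952, 4829105952, 4829105952;
    9658211904, 0, -41852251584, -41852251584, 78875397216, 4829105952, 4829105952, 4829105952, 4829105952;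
    9658211904, 0, 23999193216, 56924915616, -85753214784, 4829105952, 4829105952, 4829105952, 4829105952;
    -415892027232, -273845642400, 94344240672, 94344240672, 94344240672, 229323641184, 229323641184, 229323641184, 238157371584;
    229323641184, 8833730400, 42755255136, 42755255136, 42755255136, -4593539808, -4593539808, -4593539808, -402111407808;
    -277379134560, -44168652000, 3533492160, 3533492160, 3533492160, 95404288320, 95404288320, 95404288320, 272078896320;
    324727929504, 185508338400, -43815302784, -43815302784, -43815302784, -183104178048, -112087914048, -211510683648, -186568386048;
    324727929504, 185508338400, -43815302784, -43815302784, -43815302784, -183104178048, -232815562848, -90783034848, -186568386048;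
    324727929504, 185508338400, -43815302784, -43815302784, -43815302784, -140494419648, -161799298848, -204409057248, -186568386048]

def S2Z : Matrix (Fin 9) (Fin 9) ℤ :=
  !![-71, -71, -71, 84, 14, 80, 25, 25, 25;
    61, 61, 61, -33, -1, -43, -44, -44, -44;
    -201, 219, 174, -60, -19, -52, -35, -35, -35;
    192, -9, 9, -60, -19, -52, -35, -35, -35;
    201, -18, 9, -60, -19, -52, -35, -35, -35;
    -46, -46, -46, 33, -2, 34, -87, 105, 51;
    -46, -46, -46, 33, -2, 34, 96, -18, -9;
    -46, -46, -46, 33, -2, 34, 60, -18, 27;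
    -27, -27, -27, 9, 27, -9, 9, 9, 9]

def N2Z : Matrix (Fin 9) (Fin 9) ℤ :=
  !![-3715038310500, 2308916283300, -3777171085476, 2452850110368, -7930518549372, -1252726896960, -1252726896960, -1252726896960, -4779217026540;
    -3715038310500, 2308916283300, -3777171085476, 40525201862748, -46002870301752, -1252726896960, -1252726896960, -1252726896960, -4779217026540;
    -3715038310500, 2308916283300, -1700497353528, -52232891497596, 44678549326644, -1252726896960, -1252726896960, -1252726896960, -4779217026540;
    -28426035072600, 38545320070620, -16563478334040, -16563478334040, -16563478334040, 11784261307500, 11784261307500, 11784261307500, -16181588374380;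
    15310751437080, -18603953139420, 4542732867420, 4542732867420, 4542732867420, -11932862839920, -11932862839920, -11932862839920, 11001306996900;
    28555462213740, -32730685914960, 12298774140180, 12298774140180, 12298774140180, -13410888834420, -13410888834420, -13410888834420, 6965097632460;
    -7462033939800, 1772033327460, -4176821567160, -4176821567160, -4176821567160, -1152295176780, 2329932117645, -1848740635665, -4932612156780;
    -7462033939800, 1772033327460, -4176821567160, -4176821567160, -4176821567160, 1633486658760, 4187120008005, -6491710361565, -4932612156780;
    -7462033939800, 1772033327460, -4176821567160, -4176821567160, -4176821567160, -1152295176780, -7188155820450, 7669347302430, -4932612156780]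

-- d1=2173097678400 d2=342651165771420

def Gg : SimpleGraph (Fin 9) where
  Adj i j := AZ i j = 1
  symm := by
    have h : ∀ i j : Fin 9, AZ i j = 1 → AZ j i = 1 := @of_decide_eq_true _ (@Fintype.decidableForallFintype _ _ (fun i => Fintype.decidableForallFintype) _) (by decide)
    exact ⟨fun i j hij => h i j hij⟩
  loopless := by
    have h : ∀ i : Fin 9, ¬ AZ i i = 1 := by decide
    exact ⟨fun i => h i⟩

def Hh : SimpleGraph (Fin 9) where
  Adj i j := BZ i j = 1
  symm := by
    have h : ∀ i j : Fin 9, BZ i j = 1 → BZ j i = 1 := @of_decide_eq_true _ (@Fintype.decidableForallFintype _ _ (fun i => Fintype.decidableForallFintype) _) (by decide)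
    exact ⟨fun i j hij => h i j hij⟩
  loopless := by
    have h : ∀ i : Fin 9, ¬ BZ i i = 1 := by decide
    exact ⟨fun i => h i⟩

instance : DecidableRel Gg.Adj := fun i j => inferInstanceAs (Decidable (AZ i j = 1))
instance : DecidableRel Hh.Adj := fun i j => inferInstanceAs (Decidable (BZ i j = 1))

/-- Generic: conjugation by a matrix with nonzero determinant preserves the char poly. -/
lemma charpoly_eq_of_conj {R : Type*} [CommRing R] [IsDomain R] {n : Type*} [Fintype n]
    [DecidableEq n] (S A B N : Matrix n n R) (d : R) (hd : d ≠ 0)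
    (hSN : S * N = d • (1 : Matrix n n R)) (h : S * A = B * S) :
    A.charpoly = B.charpoly := by
  have hdet : S.det ≠ 0 := by
    intro h0
    have h1 := congrArg Matrix.det hSN
    rw [Matrix.det_mul, h0, zero_mul, Matrix.det_smul, Matrix.det_one, mul_one] at h1
    exact pow_ne_zero _ hd h1.symm
  set f := (Polynomial.C : R →+* Polynomial R) with hf
  have key : f.mapMatrix S * A.charmatrix = B.charmatrix * f.mapMatrix S := by
    unfold Matrix.charmatrix
    rw [Matrix.mul_sub, Matrix.sub_mul, ← _root_.map_mul, h, _root_.map_mul,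
      ← (Matrix.scalar_commute (Polynomial.X : Polynomial R)
          (fun r' => Commute.all _ _) (f.mapMatrix S)).eq]
  have h2 := congrArg Matrix.det key
  rw [Matrix.det_mul, Matrix.det_mul, ← RingHom.map_det] at h2
  have hC : f S.det ≠ 0 := by
    rw [hf]
    exact Polynomial.C_ne_zero.mpr hdet
  exact mul_left_cancel₀ hC (h2.trans (mul_comm _ _))

lemma adjG (inst : DecidableRel Gg.Adj) :
    SimpleGraph.adjMatrix ℝ Gg = AZ.map ⇑(Int.castRingHom ℝ) := by
  have h01 : ∀ i j, AZ i j = 0 ∨ AZ i j = 1 := @of_decide_eq_true _ (@Fintype.decidableForallFintype _ _ (fun i => Fintype.decidableForallFintype) _) (by decide)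
  ext i j
  rw [SimpleGraph.adjMatrix_apply, Matrix.map_apply]
  by_cases h : Gg.Adj i j
  · rw [if_pos h]
    have h1 : AZ i j = 1 := h
    rw [h1]; norm_num
  · rw [if_neg h]
    have h0 : AZ i j = 0 := (h01 i j).resolve_right h
    rw [h0]; norm_num

lemma adjH (inst : DecidableRel Hh.Adj) :
    SimpleGraph.adjMatrix ℝ Hh = BZ.map ⇑(Int.castRingHom ℝ) := by
  have h01 : ∀ i j, BZ i j = 0 ∨ BZ i j = 1 := @of_decide_eq_true _ (@Fintype.decidableForallFintype _ _ (fun i => Fintype.decidableForallFintype) _) (by decide)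
  ext i j
  rw [SimpleGraph.adjMatrix_apply, Matrix.map_apply]
  by_cases h : Hh.Adj i j
  · rw [if_pos h]
    have h1 : BZ i j = 1 := h
    rw [h1]; norm_num
  · rw [if_neg h]
    have h0 : BZ i j = 0 := (h01 i j).resolve_right h
    rw [h0]; norm_num

lemma adjGc (inst : DecidableRel Ggᶜ.Adj) :
    SimpleGraph.adjMatrix ℝ Ggᶜ = AcZ.map ⇑(Int.castRingHom ℝ) := by
  have k1 : ∀ i j : Fin 9, (i ≠ j ∧ ¬(AZ i j = 1)) → AcZ i j = 1 := @of_decide_eq_true _ (@Fintype.decidableForallFintype _ _ (fun i => Fintype.decidableForallFintype) _) (by decide)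
  have k0 : ∀ i j : Fin 9, ¬(i ≠ j ∧ ¬(AZ i j = 1)) → AcZ i j = 0 := @of_decide_eq_true _ (@Fintype.decidableForallFintype _ _ (fun i => Fintype.decidableForallFintype) _) (by decide)
  ext i j
  rw [SimpleGraph.adjMatrix_apply, Matrix.map_apply]
  by_cases h : Ggᶜ.Adj i j
  · rw [if_pos h]
    rw [SimpleGraph.compl_adj] at h
    rw [k1 i j ⟨h.1, h.2⟩]; norm_num
  · rw [if_neg h]
    rw [SimpleGraph.compl_adj] at h
    rw [k0 i j h]; norm_num

lemma adjHc (inst : DecidableRel Hhᶜ.Adj) :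
    SimpleGraph.adjMatrix ℝ Hhᶜ = BcZ.map ⇑(Int.castRingHom ℝ) := by
  have k1 : ∀ i j : Fin 9, (i ≠ j ∧ ¬(BZ i j = 1)) → BcZ i j = 1 := @of_decide_eq_true _ (@Fintype.decidableForallFintype _ _ (fun i => Fintype.decidableForallFintype) _) (by decide)
  have k0 : ∀ i j : Fin 9, ¬(i ≠ j ∧ ¬(BZ i j = 1)) → BcZ i j = 0 := @of_decide_eq_true _ (@Fintype.decidableForallFintype _ _ (fun i => Fintype.decidableForallFintype) _) (by decide)
  ext i j
  rw [SimpleGraph.adjMatrix_apply, Matrix.map_apply]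
  by_cases h : Hhᶜ.Adj i j
  · rw [if_pos h]
    rw [SimpleGraph.compl_adj] at h
    rw [k1 i j ⟨h.1, h.2⟩]; norm_num
  · rw [if_neg h]
    rw [SimpleGraph.compl_adj] at h
    rw [k0 i j h]; norm_num

lemma charAB : AZ.charpoly = BZ.charpoly := by
  apply charpoly_eq_of_conj S1Z AZ BZ N1Z (2173097678400 : ℤ)
  · norm_num
  · decide
  · decide

lemma charABc : AcZ.charpoly = BcZ.charpoly := by
  apply charpoly_eq_of_conj S2Z AcZ BcZ N2Z (342651165771420 : ℤ)
  · norm_num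
  · decide
  · decide

lemma cogG : IsCograph Gg := by
  rintro ⟨f, hf⟩
  have key : ∀ a b c d : Fin 9, Gg.Adj a b → Gg.Adj b c → Gg.Adj c d →
      ¬Gg.Adj a c → ¬Gg.Adj a d → ¬Gg.Adj b d → False := by decide
  have p01 : (SimpleGraph.pathGraph 4).Adj 0 1 := by
    rw [SimpleGraph.pathGraph_adj]; decide
  have p12 : (SimpleGraph.pathGraph 4).Adj 1 2 := by
    rw [SimpleGraph.pathGraph_adj]; decide
  have p23 : (SimpleGraph.pathGraph 4).Adj 2 3 := by
    rw [SimpleGraph.pathGraph_adj]; decide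
  have p02 : ¬(SimpleGraph.pathGraph 4).Adj 0 2 := by
    rw [SimpleGraph.pathGraph_adj]; decide
  have p03 : ¬(SimpleGraph.pathGraph 4).Adj 0 3 := by
    rw [SimpleGraph.pathGraph_adj]; decide
  have p13 : ¬(SimpleGraph.pathGraph 4).Adj 1 3 := by
    rw [SimpleGraph.pathGraph_adj]; decide
  exact key (f 0) (f 1) (f 2) (f 3)
    ((hf 0 1).mpr p01) ((hf 1 2).mpr p12) ((hf 2 3).mpr p23)
    (fun h => p02 ((hf 0 2).mp h)) (fun h => p03 ((hf 0 3).mp h))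
    (fun h => p13 ((hf 1 3).mp h))

lemma notCogH : ¬ IsCograph Hh := by
  intro hIs
  apply hIs
  refine ⟨⟨![0, 8, 1, 2], by decide⟩, ?_⟩
  intro i j
  rw [SimpleGraph.pathGraph_adj]
  fin_cases i <;> fin_cases j <;>
    simp only [Function.Embedding.coeFn_mk] <;> decide

/-- There is a pair of generalized cospectral, non-isomorphic graphs on 9 vertices,
one of which is a cograph and the other not. -/
theorem exists_nonDGS_cograph_on_nine_vertices :
    ∃ G H : SimpleGraph (Fin 9),
      GenCospectral G H ∧ ¬ Nonempty (G ≃g H) ∧ IsCograph G ∧ ¬ IsCograph H := by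
  refine ⟨Gg, Hh, ⟨?_, ?_⟩, ?_, cogG, notCogH⟩
  · show adjCharPoly Gg = adjCharPoly Hh
    unfold adjCharPoly
    rw [adjG, adjH, Matrix.charpoly_map, Matrix.charpoly_map, charAB]
  · show adjCharPoly Ggᶜ = adjCharPoly Hhᶜ
    unfold adjCharPoly
    rw [adjGc, adjHc, Matrix.charpoly_map, Matrix.charpoly_map, charABc]
  · rintro ⟨e⟩
    apply cogG
    obtain ⟨f, hf⟩ := not_not.mp notCogH
    refine ⟨f.trans e.symm.toEquiv.toEmbedding, fun i j => ?_⟩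
    have : ∀ x, (f.trans e.symm.toEquiv.toEmbedding) x = e.symm (f x) := fun _ => rfl
    rw [this, this, SimpleGraph.Iso.map_adj_iff]
    exact hf i j
end

section
/- Let T and T' be two hierarchies of the same size m with m ≥ 2. Then for every n, the number of isomorphism classes of hierarchies of size n containing no subhierarchy isomorphic to T equals the number of isomorphism classes of hierarchies of size n containing no subhierarchy isomorphic to T'. -/
/-- Finite rooted unordered trees, presented with an ordered list of children
(unorderedness is taken care of by the isomorphism relation `RTree.Iso`). -/
inductive RTree : Type
  | node : List RTree → RTree

/-- The number of leaves (external vertices) of a rooted tree: the *size* of a hierarchy. -/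
def RTree.leaves : RTree → ℕ
  | .node [] => 1
  | .node (a :: l) => ((a :: l).attach.map (fun x => RTree.leaves x.1)).sum
decreasing_by
  have := List.sizeOf_lt_of_mem x.2
  simp only [RTree.node.sizeOf_spec]
  omega

/-- A hierarchy: a rooted tree in which no vertex has exactly one child. -/
inductive RTree.IsHierarchy : RTree → Prop
  | node {l : List RTree} : l.length ≠ 1 → (∀ t ∈ l, RTree.IsHierarchy t) →
      RTree.IsHierarchy (.node l)

/-- `s.SubtreeOf t` : `s` is the subtree of `t` rooted at some vertex of `t`
(that vertex together with all of its descendants). -/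
inductive RTree.SubtreeOf : RTree → RTree → Prop
  | refl (t : RTree) : RTree.SubtreeOf t t
  | child {s c : RTree} {l : List RTree} : c ∈ l → RTree.SubtreeOf s c →
      RTree.SubtreeOf s (.node l)

/-- Isomorphism of rooted unordered trees: the children of the two roots can be
matched up bijectively by isomorphisms. -/
inductive RTree.Iso : RTree → RTree → Prop
  | node {l₁ l l₂ : List RTree} (h₁ : List.Forall₂ RTree.Iso l₁ l) (h₂ : l.Perm l₂) :
      RTree.Iso (.node l₁) (.node l₂)

/-- The number of isomorphism classes of hierarchies of size `n` (OEIS A000669). -/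
noncomputable def hierarchyCount (n : ℕ) : ℕ :=
  Nat.card (Quot fun a b : {t : RTree // t.IsHierarchy ∧ t.leaves = n} => RTree.Iso a.1 b.1)

/-- `t` contains no subhierarchy isomorphic to `S`. -/
def RTree.Avoids (t S : RTree) : Prop :=
  ∀ s : RTree, s.SubtreeOf t → ¬ RTree.Iso s S

/-- The number of isomorphism classes of hierarchies of size `n` containing
no subhierarchy isomorphic to `S`. -/
noncomputable def avoidCount (S : RTree) (n : ℕ) : ℕ :=
  Nat.card (Quot fun a b : {t : RTree // t.IsHierarchy ∧ t.leaves = n ∧ t.Avoids S} =>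
    RTree.Iso a.1 b.1)

namespace RTree

theorem ind' (P : RTree → Prop) (h : ∀ l : List RTree, (∀ t ∈ l, P t) → P (.node l)) :
    ∀ t, P t
  | .node l => h l fun t ht => ind' P h t
termination_by t => sizeOf t
decreasing_by
  have := List.sizeOf_lt_of_mem ht
  simp only [RTree.node.sizeOf_spec]
  omega

theorem forall₂_imp_mem {α β : Type*} {r p : α → β → Prop} :
    ∀ {l₁ : List α} {l₂ : List β}, List.Forall₂ r l₁ l₂ →
      (∀ a ∈ l₁, ∀ b ∈ l₂, r a b → p a b) → List.Forall₂ p l₁ l₂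
  | _, _, .nil, _ => .nil
  | _, _, .cons hab h, hm =>
    .cons (hm _ (by simp) _ (by simp) hab)
      (forall₂_imp_mem h fun a ha b hb hr =>
        hm a (List.mem_cons_of_mem _ ha) b (List.mem_cons_of_mem _ hb) hr)

theorem forall₂_comp {α : Type*} {r : α → α → Prop} :
    ∀ {l₁ l₂ l₃ : List α}, List.Forall₂ r l₁ l₂ → List.Forall₂ r l₂ l₃ →
      (∀ a ∈ l₁, ∀ b c, r a b → r b c → r a c) → List.Forall₂ r l₁ l₃
  | _, _, _, .nil, h2, _ => by cases h2; exact .nil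
  | _, _, _, .cons hab h1, h2, htr => by
    cases h2 with
    | cons hbc h2 =>
      exact .cons (htr _ (by simp) _ _ hab hbc)
        (forall₂_comp h1 h2 fun a ha => htr a (List.mem_cons_of_mem _ ha))

theorem iso_refl : ∀ t, Iso t t := by
  refine ind' _ ?_
  intro l ih
  exact Iso.node (List.forall₂_same.2 ih) (List.Perm.refl l)

theorem iso_symm : ∀ t s, Iso t s → Iso s t := by
  refine ind' (fun t => ∀ s, Iso t s → Iso s t) ?_
  intro l₁ ih s h
  cases h with
  | node h₁ h₂ =>
    have h₁' := forall₂_imp_mem h₁.flip fun a _ b hb hr => ih b hb a hr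
    obtain ⟨l', hf, hp⟩ := List.perm_comp_forall₂ h₂.symm h₁'
    exact Iso.node hf hp

theorem iso_trans : ∀ t s u, Iso t s → Iso s u → Iso t u := by
  refine ind' (fun t => ∀ s u, Iso t s → Iso s u → Iso t u) ?_
  intro l₁ ih s u h1 h2
  cases h1 with
  | node ha hpa =>
    cases h2 with
    | node hb hpb =>
      obtain ⟨lc, hf, hp⟩ := List.perm_comp_forall₂ hpa hb
      exact Iso.node (forall₂_comp ha hf fun a haa => ih a haa) (hp.trans hpb)

theorem leaves_node : ∀ (l : List RTree), l ≠ [] →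
    (RTree.node l).leaves = (l.map leaves).sum := by
  intro l hl
  cases l with
  | nil => exact absurd rfl hl
  | cons a l => rw [RTree.leaves]; simp

theorem leaves_pos : ∀ t : RTree, 1 ≤ t.leaves := by
  refine ind' _ ?_
  intro l ih
  cases l with
  | nil => rw [RTree.leaves]
  | cons a l =>
    rw [leaves_node _ (by simp)]
    calc 1 ≤ a.leaves := ih a (by simp)
    _ ≤ _ := List.single_le_sum (fun _ _ => Nat.zero_le _) _ (by simp)

theorem sum_leaves_pos (l : List RTree) (hl : l ≠ []) : 1 ≤ (l.map leaves).sum := by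
  obtain ⟨a, ha⟩ := List.exists_mem_of_ne_nil l hl
  calc 1 ≤ a.leaves := leaves_pos a
  _ ≤ _ := List.single_le_sum (fun _ _ => Nat.zero_le _) _ (List.mem_map_of_mem ha)

theorem child_leaves_le {c : RTree} {l : List RTree} (hc : c ∈ l) :
    c.leaves ≤ (RTree.node l).leaves := by
  rw [leaves_node _ (List.ne_nil_of_mem hc)]
  exact List.single_le_sum (fun _ _ => Nat.zero_le _) _ (List.mem_map_of_mem hc)

theorem child_leaves_lt {c : RTree} {l : List RTree} (hc : c ∈ l) (hlen : l.length ≠ 1) :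
    c.leaves < (RTree.node l).leaves := by
  obtain ⟨u, v, rfl⟩ := List.append_of_mem hc
  rw [leaves_node _ (by simp)]
  rw [List.map_append, List.sum_append, List.map_cons, List.sum_cons]
  rcases eq_or_ne u [] with rfl | hu
  · have hv : v ≠ [] := by rintro rfl; simp at hlen
    have := sum_leaves_pos _ hv
    simp only [List.map_nil, List.sum_nil]
    omega
  · have := sum_leaves_pos _ hu
    omega

theorem map_leaves_eq : ∀ {l₁ l₂ : List RTree},
    List.Forall₂ (fun a b => leaves a = leaves b) l₁ l₂ → l₁.map leaves = l₂.map leaves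
  | _, _, .nil => rfl
  | _, _, .cons h hs => by simp [map_leaves_eq hs, h]

theorem iso_leaves : ∀ t s, Iso t s → t.leaves = s.leaves := by
  refine ind' (fun t => ∀ s, Iso t s → t.leaves = s.leaves) ?_
  intro l₁ ih s h
  cases h with
  | @node _ l l₂ h₁ h₂ =>
    cases l₁ with
    | nil =>
      cases h₁
      have : l₂ = [] := h₂.symm.eq_nil
      subst this
      rfl
    | cons a l₁' =>
      have hne : (a :: l₁') ≠ [] := by simp
      have hlne : l ≠ [] := by
        intro h; subst h; cases h₁
      have hl₂ne : l₂ ≠ [] := by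
        intro h; subst h; exact hlne h₂.eq_nil
      rw [leaves_node _ hne, leaves_node _ hl₂ne, ← (h₂.map leaves).sum_eq]
      rw [map_leaves_eq (forall₂_imp_mem h₁ fun a ha b _ hr => ih a ha b hr)]

theorem subtree_trans' {a : RTree} : ∀ {b c : RTree}, SubtreeOf b c → SubtreeOf a b → SubtreeOf a c := by
  intro b c h2
  induction h2 with
  | refl => exact id
  | child hc _ ih => exact fun h1 => .child hc (ih h1)

theorem avoids_subtree {s t S : RTree} (h : SubtreeOf s t) (ha : t.Avoids S) : s.Avoids S :=
  fun u hu => ha u (subtree_trans' h hu)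

theorem hierarchy_children {l : List RTree} (h : IsHierarchy (.node l)) :
    ∀ t ∈ l, IsHierarchy t := by cases h; assumption

theorem hierarchy_length {l : List RTree} (h : IsHierarchy (.node l)) : l.length ≠ 1 := by
  cases h; assumption

theorem subtree_leaves_le {s t : RTree} (h : SubtreeOf s t) : s.leaves ≤ t.leaves := by
  induction h with
  | refl => exact le_refl _
  | child hc _ ih => exact ih.trans (child_leaves_le hc)

theorem subtree_eq_or_lt {s t : RTree} (ht : t.IsHierarchy) (h : SubtreeOf s t) :
    s = t ∨ s.leaves < t.leaves := by
  cases h with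
  | refl => exact .inl rfl
  | @child c l hc hsub =>
    exact .inr ((subtree_leaves_le hsub).trans_lt (child_leaves_lt hc (hierarchy_length ht)))

theorem avoids_of_not_iso {t S : RTree} (ht : t.IsHierarchy) (hlt : S.leaves = t.leaves)
    (hne : ¬ Iso t S) : t.Avoids S := by
  intro s hs hiso
  rcases subtree_eq_or_lt ht hs with rfl | h
  · exact hne hiso
  · rw [iso_leaves _ _ hiso, hlt] at h
    omega

theorem avoids_of_child {l : List RTree} {c S : RTree} (h : IsHierarchy (.node l))
    (hS : S.leaves = (RTree.node l).leaves) (hc : c ∈ l) : c.Avoids S := by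
  intro s hs hiso
  have h1 : s.leaves ≤ c.leaves := subtree_leaves_le hs
  have h2 : c.leaves < (RTree.node l).leaves := child_leaves_lt hc (hierarchy_length h)
  rw [iso_leaves _ _ hiso, hS] at h1
  omega

theorem avoids_child {l : List RTree} {c S : RTree} (ha : (RTree.node l).Avoids S)
    (hc : c ∈ l) : c.Avoids S :=
  avoids_subtree (.child hc (.refl c)) ha

open scoped Classical in
noncomputable def swapT (T T' : RTree) : RTree → RTree
  | .node l =>
    if Iso (.node l) T then T'
    else if Iso (.node l) T' then T
    else .node (l.attach.map fun x => swapT T T' x.1)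
decreasing_by
  have := List.sizeOf_lt_of_mem x.2
  simp only [RTree.node.sizeOf_spec]
  omega

open scoped Classical in
theorem swapT_def (T T' : RTree) (l : List RTree) :
    swapT T T' (.node l) =
      if Iso (.node l) T then T'
      else if Iso (.node l) T' then T
      else .node (l.map (swapT T T')) := by
  rw [swapT]
  simp

open scoped Classical in
theorem swap_iso (T T' : RTree) : ∀ t s, Iso t s → Iso (swapT T T' t) (swapT T T' s) := by
  refine ind' (fun t => ∀ s, Iso t s → Iso (swapT T T' t) (swapT T T' s)) ?_
  intro l₁ ih s hts
  cases hts with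
  | @node _ l l₂ h₁ h₂ =>
    have hts : Iso (.node l₁) (.node l₂) := Iso.node h₁ h₂
    rw [swapT_def, swapT_def]
    by_cases hA : Iso (.node l₁) T
    · rw [if_pos hA, if_pos (iso_trans _ _ _ (iso_symm _ _ hts) hA)]
      exact iso_refl T'
    · rw [if_neg hA, if_neg (fun h => hA (iso_trans _ _ _ hts h))]
      by_cases hB : Iso (.node l₁) T'
      · rw [if_pos hB, if_pos (iso_trans _ _ _ (iso_symm _ _ hts) hB)]
        exact iso_refl T
      · rw [if_neg hB, if_neg (fun h => hB (iso_trans _ _ _ hts h))]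
        refine Iso.node (l := l.map (swapT T T')) ?_ (h₂.map _)
        rw [List.forall₂_map_left_iff, List.forall₂_map_right_iff]
        exact forall₂_imp_mem h₁ fun a ha b _ hab => ih a ha b hab

open scoped Classical in
theorem swap_rev {T T' : RTree} :
    ∀ c, c.IsHierarchy → c.Avoids T → ∀ lu : List RTree, (∀ b ∈ lu, b.Avoids T) →
      Iso (swapT T T' c) (.node lu) → Iso c T' ∨ Iso c (.node lu) := by
  refine ind' (fun c => c.IsHierarchy → c.Avoids T → ∀ lu : List RTree,
    (∀ b ∈ lu, b.Avoids T) → Iso (swapT T T' c) (.node lu) →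
    Iso c T' ∨ Iso c (.node lu)) ?_
  intro l ihc hh ha lu hbu hiso
  have hcT : ¬ Iso (.node l) T := ha _ (.refl _)
  by_cases hcT' : Iso (.node l) T'
  · exact .inl hcT'
  · right
    rw [swapT_def, if_neg hcT, if_neg hcT'] at hiso
    cases hiso with
    | @node _ l' _ h₁ h₂ =>
      rw [List.forall₂_map_left_iff] at h₁
      refine Iso.node (l := l') ?_ h₂
      refine forall₂_imp_mem h₁ ?_
      intro a haa b hbb hab
      have hbT : b.Avoids T := hbu b (h₂.subset hbb)
      obtain ⟨lb⟩ := b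
      rcases ihc a haa (hierarchy_children hh a haa) (avoids_child ha haa) lb
          (fun b' hb' => avoids_child hbT hb') hab with haT' | h
      · -- a ≅ T', so swapT a = T, and Iso T b contradicts b avoiding T
        exfalso
        obtain ⟨la⟩ := a
        rw [swapT_def, if_neg (avoids_child ha haa _ (.refl _)), if_pos haT'] at hab
        exact hbT _ (.refl _) (iso_symm _ _ hab)
      · exact h

open scoped Classical in
theorem not_swap_iso_T {T T' : RTree} (hT : T.IsHierarchy)
    {c : RTree} (hc : c.IsHierarchy) (ha : c.Avoids T) (hcT' : ¬ Iso c T') :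
    ¬ Iso (swapT T T' c) T := by
  intro h
  obtain ⟨lT⟩ := T
  rcases swap_rev c hc ha lT (fun b hb => avoids_of_child hT rfl hb) h with h' | h'
  · exact hcT' h'
  · exact ha _ (.refl _) h'

open scoped Classical in
theorem not_swap_iso_T' {T T' : RTree} (hT' : T'.IsHierarchy)
    (hl : T.leaves = T'.leaves)
    {c : RTree} (hc : c.IsHierarchy) (ha : c.Avoids T) (hcT' : ¬ Iso c T') :
    ¬ Iso (swapT T T' c) T' := by
  intro h
  obtain ⟨lT'⟩ := T'
  rcases swap_rev c hc ha lT' (fun b hb => avoids_of_child hT' hl hb) h with h' | h'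
  · exact hcT' h'
  · exact hcT' h'

open scoped Classical in
theorem swap_T_of_iso {T T' t : RTree} (h : Iso t T) : swapT T T' t = T' := by
  obtain ⟨l⟩ := t
  rw [swapT_def, if_pos h]

open scoped Classical in
theorem swap_main {T T' : RTree} (hT : T.IsHierarchy) (hT' : T'.IsHierarchy)
    (hl : T.leaves = T'.leaves) (hne : ¬ Iso T T') :
    ∀ t, t.IsHierarchy → t.Avoids T →
      (swapT T T' t).IsHierarchy ∧ (swapT T T' t).leaves = t.leaves ∧
      (swapT T T' t).Avoids T' ∧ Iso (swapT T T' (swapT T T' t)) t := by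
  refine ind' _ ?_
  intro l ih hh ha
  have hcT : ¬ Iso (.node l) T := ha _ (.refl _)
  by_cases hcT' : Iso (.node l) T'
  · rw [swapT_def, if_neg hcT, if_pos hcT']
    refine ⟨hT, hl.trans (iso_leaves _ _ hcT').symm,
      avoids_of_not_iso hT hl.symm hne, ?_⟩
    rw [swap_T_of_iso (iso_refl T)]
    exact iso_symm _ _ hcT'
  · have hφeq : swapT T T' (.node l) = .node (l.map (swapT T T')) := by
      rw [swapT_def, if_neg hcT, if_neg hcT']
    have ihs := fun a (haa : a ∈ l) =>
      ih a haa (hierarchy_children hh a haa) (avoids_child ha haa)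
    rw [hφeq]
    have hhier : (RTree.node (l.map (swapT T T'))).IsHierarchy := by
      refine IsHierarchy.node (by simpa using hierarchy_length hh) ?_
      intro t ht
      obtain ⟨a, haa, rfl⟩ := List.mem_map.1 ht
      exact (ihs a haa).1
    have hleav : (RTree.node (l.map (swapT T T'))).leaves = (RTree.node l).leaves := by
      cases l with
      | nil => simp
      | cons a l' =>
        rw [leaves_node _ (by simp), leaves_node _ (by simp), List.map_map]
        congr 1
        refine List.map_congr_left ?_
        intro x hx
        exact (ihs x hx).2.1
    have hnotT : ¬ Iso (.node (l.map (swapT T T'))) T := by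
      rw [← hφeq]
      exact not_swap_iso_T hT hh ha hcT'
    have hnotT' : ¬ Iso (.node (l.map (swapT T T'))) T' := by
      rw [← hφeq]
      exact not_swap_iso_T' hT' hl hh ha hcT'
    refine ⟨hhier, hleav, ?_, ?_⟩
    · intro s hs hiso
      cases hs with
      | refl => exact hnotT' hiso
      | child hc hsub =>
        obtain ⟨a, haa, rfl⟩ := List.mem_map.1 hc
        exact (ihs a haa).2.2.1 s hsub hiso
    · rw [swapT_def, if_neg hnotT, if_neg hnotT', List.map_map]
      refine Iso.node (l := l) ?_ (List.Perm.refl l)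
      rw [List.forall₂_map_left_iff]
      refine List.forall₂_same.2 ?_
      intro x hx
      exact (ihs x hx).2.2.2

open scoped Classical in
theorem swapT_comm {T T' : RTree} (hne : ¬ Iso T T') : ∀ t, swapT T' T t = swapT T T' t := by
  refine ind' _ ?_
  intro l ih
  rw [swapT_def, swapT_def]
  by_cases h1 : Iso (.node l) T <;> by_cases h2 : Iso (.node l) T'
  · exact absurd (iso_trans _ _ _ (iso_symm _ _ h1) h2) hne
  · rw [if_neg h2, if_pos h1, if_pos h1]
  · rw [if_pos h2, if_neg h1, if_pos h2]
  · rw [if_neg h2, if_neg h1, if_neg h1, if_neg h2]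
    congr 1
    exact List.map_congr_left ih

end RTree

/-- If `T` and `T'` are hierarchies of the same size `m ≥ 2`, then for every `n` the number of
isomorphism classes of hierarchies of size `n` avoiding `T` equals the number of those
avoiding `T'`. -/
theorem avoidCount_eq_of_leaves_eq {m : ℕ} (hm : 2 ≤ m) (T T' : RTree)
    (hT : T.IsHierarchy) (hT' : T'.IsHierarchy)
    (hTm : T.leaves = m) (hT'm : T'.leaves = m) (n : ℕ) :
    avoidCount T n = avoidCount T' n := by
  unfold avoidCount
  by_cases hiso : RTree.Iso T T'
  · have hpred : ∀ t : RTree, t.Avoids T ↔ t.Avoids T' := by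
      intro t
      constructor <;> intro h s hs hi
      · exact h s hs (RTree.iso_trans _ _ _ hi (RTree.iso_symm _ _ hiso))
      · exact h s hs (RTree.iso_trans _ _ _ hi hiso)
    apply Nat.card_congr
    refine Quot.congr (Equiv.subtypeEquivRight ?_) ?_
    · intro t
      rw [hpred t]
    · intro a b
      exact Iff.rfl
  · have hl : T.leaves = T'.leaves := by rw [hTm, hT'm]
    have hne' : ¬ RTree.Iso T' T := fun h => hiso (RTree.iso_symm _ _ h)
    have main := RTree.swap_main hT hT' hl hiso
    have hcomm := RTree.swapT_comm hiso
    have main' : ∀ t, t.IsHierarchy → t.Avoids T' →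
        (RTree.swapT T T' t).IsHierarchy ∧ (RTree.swapT T T' t).leaves = t.leaves ∧
        (RTree.swapT T T' t).Avoids T ∧
        RTree.Iso (RTree.swapT T T' (RTree.swapT T T' t)) t := by
      intro t h1 h2
      have := RTree.swap_main hT' hT hl.symm hne' t h1 h2
      simpa only [hcomm] using this
    apply Nat.card_congr
    exact {
      toFun := Quot.map
        (fun a => (⟨RTree.swapT T T' a.1, (main a.1 a.2.1 a.2.2.2).1,
          by rw [(main a.1 a.2.1 a.2.2.2).2.1, a.2.2.1], (main a.1 a.2.1 a.2.2.2).2.2.1⟩ :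
          {t : RTree // t.IsHierarchy ∧ t.leaves = n ∧ t.Avoids T'}))
        (fun a b h => RTree.swap_iso T T' _ _ h)
      invFun := Quot.map
        (fun b => (⟨RTree.swapT T T' b.1, (main' b.1 b.2.1 b.2.2.2).1,
          by rw [(main' b.1 b.2.1 b.2.2.2).2.1, b.2.2.1], (main' b.1 b.2.1 b.2.2.2).2.2.1⟩ :
          {t : RTree // t.IsHierarchy ∧ t.leaves = n ∧ t.Avoids T}))
        (fun a b h => RTree.swap_iso T T' _ _ h)
      left_inv := by
        intro x
        induction x using Quot.ind with
        | _ a => exact Quot.sound (main a.1 a.2.1 a.2.2.2).2.2.2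
      right_inv := by
        intro y
        induction y using Quot.ind with
        | _ b => exact Quot.sound (main' b.1 b.2.1 b.2.2.2).2.2.2 }
end
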